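/- For p = 2 and β(u) = q/(1−(q+1)u) with q > 0, defined on [0, 1/(q+1)): the induced function g satisfies 1 + g(v) = 1/(1−v)^q on [0,1), i.e., Λ = 1 is finite. -/

import Mathlib

open Real Set MeasureTheory Filter

private lemma aux_int1 (q : ℝ) (hq : 0 < q) (t : ℝ) (ht0 : 0 ≤ t) (ht1 : t < 1/(q+1)) :
    ∫ θ in (0:ℝ)..t, q / (1 - (q+1)*θ) = -(q/(q+1)) * Real.log (1 - (q+1)*t) := by
  have hc : (0:ℝ) < q+1 := by linarith
  have hpos : ∀ x ∈ Set.uIcc (0:ℝ) t, 0 < 1 - (q+1)*x := by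
    intro x hx
    rw [Set.uIcc_of_le ht0] at hx
    have h1 : (q+1)*x ≤ (q+1)*t := by nlinarith [hx.2]
    have h2 : (q+1)*t < 1 := by
      rw [lt_div_iff₀ hc] at ht1; linarith
    linarith
  have hderiv : ∀ x ∈ Set.uIcc (0:ℝ) t,
      HasDerivAt (fun θ => -(q/(q+1)) * Real.log (1 - (q+1)*θ)) (q / (1 - (q+1)*x)) x := by
    intro x hx
    have hs := hpos x hx
    have h1 : HasDerivAt (fun θ : ℝ => 1 - (q+1)*θ) (-(q+1)) x := by
      simpa using (((hasDerivAt_id x).const_mul (q+1)).const_sub (1:ℝ))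
    have h2 := (h1.log (ne_of_gt hs)).const_mul (-(q/(q+1)))
    refine h2.congr_deriv ?_
    field_simp
  have hcont : IntervalIntegrable (fun θ => q / (1 - (q+1)*θ)) MeasureTheory.volume 0 t := by
    apply ContinuousOn.intervalIntegrable
    apply ContinuousOn.div continuousOn_const (by fun_prop)
    intro x hx; exact ne_of_gt (hpos x hx)
  rw [intervalIntegral.integral_eq_sub_of_hasDerivAt hderiv hcont]
  simp

private lemma aux_int2 (q : ℝ) (hq : 0 < q) (t : ℝ) (ht0 : 0 ≤ t) (ht1 : t < 1/(q+1)) :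
    ∫ θ in (0:ℝ)..t, (1 - (q+1)*θ) ^ (-(q/(q+1))) = 1 - (1 - (q+1)*t) ^ ((q+1)⁻¹) := by
  have hc : (0:ℝ) < q+1 := by linarith
  have hpos : ∀ x ∈ Set.uIcc (0:ℝ) t, 0 < 1 - (q+1)*x := by
    intro x hx
    rw [Set.uIcc_of_le ht0] at hx
    have h1 : (q+1)*x ≤ (q+1)*t := by nlinarith [hx.2]
    have h2 : (q+1)*t < 1 := by
      rw [lt_div_iff₀ hc] at ht1; linarith
    linarith
  have hexp : (q+1)⁻¹ - 1 = -(q/(q+1)) := by field_simp; ring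
  have hderiv : ∀ x ∈ Set.uIcc (0:ℝ) t,
      HasDerivAt (fun θ => -((1 - (q+1)*θ) ^ ((q+1)⁻¹))) ((1 - (q+1)*x) ^ (-(q/(q+1)))) x := by
    intro x hx
    have hs := hpos x hx
    have h1 : HasDerivAt (fun θ : ℝ => 1 - (q+1)*θ) (-(q+1)) x := by
      simpa using (((hasDerivAt_id x).const_mul (q+1)).const_sub (1:ℝ))
    have h2 := (h1.rpow_const (p := (q+1)⁻¹) (Or.inl (ne_of_gt hs))).neg
    refine h2.congr_deriv ?_
    rw [← hexp]
    field_simp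
  have hcont : IntervalIntegrable (fun θ => (1 - (q+1)*θ) ^ (-(q/(q+1))))
      MeasureTheory.volume 0 t := by
    apply ContinuousOn.intervalIntegrable
    apply ContinuousOn.rpow_const (by fun_prop)
    intro x hx; exact Or.inl (ne_of_gt (hpos x hx))
  rw [intervalIntegral.integral_eq_sub_of_hasDerivAt hderiv hcont]
  simp [Real.one_rpow]
  ring

/-- p = 2, q > 0, β(u) = q/(1−(q+1)u) on [0,1/(q+1)): the induced g
satisfies 1 + g(v) = 1/(1−v)^q on [0,1), and Λ = sup Ψ = 1 is finite. -/
theorem stmt9 (q : ℝ) (hq : 0 < q)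
    (β γ Ψ g : ℝ → ℝ)
    (hβ : ∀ u ∈ Set.Ico (0:ℝ) (1 / (q + 1)), β u = q / (1 - (q + 1) * u))
    (hγ : ∀ t ∈ Set.Ico (0:ℝ) (1 / (q + 1)), γ t = ∫ θ in (0:ℝ)..t, β θ)
    (hΨ : ∀ t ∈ Set.Ico (0:ℝ) (1 / (q + 1)), Ψ t = ∫ θ in (0:ℝ)..t, Real.exp (γ θ))
    (hg : ∀ t ∈ Set.Ico (0:ℝ) (1 / (q + 1)), g (Ψ t) = Real.exp (γ t) - 1) :
    (∀ v ∈ Set.Ico (0:ℝ) 1, 1 + g v = 1 / (1 - v) ^ q) ∧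
    Ψ '' Set.Ico (0:ℝ) (1 / (q + 1)) = Set.Ico (0:ℝ) 1 ∧
    sSup (Ψ '' Set.Ico (0:ℝ) (1 / (q + 1))) = 1 := by
  have hc : (0:ℝ) < q + 1 := by linarith
  -- membership of points of [0,t] in the domain
  have hsub : ∀ t ∈ Set.Ico (0:ℝ) (1/(q+1)), ∀ θ ∈ Set.uIcc (0:ℝ) t,
      θ ∈ Set.Ico (0:ℝ) (1/(q+1)) := by
    intro t ht θ hθ
    rw [Set.uIcc_of_le ht.1] at hθ
    exact ⟨hθ.1, lt_of_le_of_lt hθ.2 ht.2⟩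
  have hspos : ∀ t ∈ Set.Ico (0:ℝ) (1/(q+1)), 0 < 1 - (q+1)*t := by
    intro t ht
    have := ht.2
    rw [lt_div_iff₀ hc] at this
    linarith
  -- closed form for γ
  have hγf : ∀ t ∈ Set.Ico (0:ℝ) (1/(q+1)),
      γ t = -(q/(q+1)) * Real.log (1 - (q+1)*t) := by
    intro t ht
    rw [hγ t ht, intervalIntegral.integral_congr
      (g := fun θ => q / (1 - (q+1)*θ)) (fun θ hθ => hβ θ (hsub t ht θ hθ))]
    exact aux_int1 q hq t ht.1 ht.2
  -- exp of γ
  have hexpf : ∀ t ∈ Set.Ico (0:ℝ) (1/(q+1)),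
      Real.exp (γ t) = (1 - (q+1)*t) ^ (-(q/(q+1))) := by
    intro t ht
    rw [hγf t ht, Real.rpow_def_of_pos (hspos t ht)]
    ring_nf
  -- closed form for Ψ
  have hΨf : ∀ t ∈ Set.Ico (0:ℝ) (1/(q+1)),
      Ψ t = 1 - (1 - (q+1)*t) ^ ((q+1)⁻¹) := by
    intro t ht
    rw [hΨ t ht, intervalIntegral.integral_congr
      (g := fun θ => (1 - (q+1)*θ) ^ (-(q/(q+1))))
      (fun θ hθ => hexpf θ (hsub t ht θ hθ))]
    exact aux_int2 q hq t ht.1 ht.2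
  -- for each v ∈ [0,1), a preimage t
  have hpre : ∀ v ∈ Set.Ico (0:ℝ) 1, ∃ t ∈ Set.Ico (0:ℝ) (1/(q+1)),
      1 - (q+1)*t = (1-v) ^ (q+1) ∧ Ψ t = v := by
    intro v hv
    have h1v : 0 < 1 - v := by linarith [hv.2]
    have hx1 : (1-v) ^ (q+1) ≤ 1 := Real.rpow_le_one h1v.le (by linarith [hv.1]) hc.le
    have hx0 : 0 < (1-v) ^ (q+1) := Real.rpow_pos_of_pos h1v _
    refine ⟨(1 - (1-v) ^ (q+1)) / (q+1), ⟨div_nonneg (by linarith) hc.le, ?_⟩, ?_, ?_⟩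
    · rw [div_lt_div_iff₀ hc hc]
      nlinarith
    · field_simp; ring
    · have hs : 1 - (q+1) * ((1 - (1-v) ^ (q+1)) / (q+1)) = (1-v) ^ (q+1) := by
        field_simp; ring
      rw [hΨf _ ⟨div_nonneg (by linarith) hc.le, by rw [div_lt_div_iff₀ hc hc]; nlinarith⟩, hs,
        ← Real.rpow_mul h1v.le, mul_inv_cancel₀ hc.ne', Real.rpow_one]
      ring
  refine ⟨?_, ?_, ?_⟩
  · -- part 1
    intro v hv
    obtain ⟨t, ht, hst, hΨt⟩ := hpre v hv
    have h1v : 0 < 1 - v := by linarith [hv.2]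
    have key : 1 + g v = Real.exp (γ t) := by rw [← hΨt, hg t ht]; ring
    rw [key, hexpf t ht, hst, ← Real.rpow_mul h1v.le]
    have h3 : (q+1) * -(q/(q+1)) = -q := by field_simp
    rw [h3, Real.rpow_neg h1v.le, one_div]
  · -- image
    ext v
    constructor
    · rintro ⟨t, ht, rfl⟩
      have hs := hspos t ht
      have hle : 1 - (q+1)*t ≤ 1 := by nlinarith [ht.1]
      have h1 : (1 - (q+1)*t) ^ ((q+1)⁻¹) ≤ 1 :=
        Real.rpow_le_one hs.le hle (by positivity)
      have h2 : 0 < (1 - (q+1)*t) ^ ((q+1)⁻¹) := Real.rpow_pos_of_pos hs _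
      rw [hΨf t ht]
      exact ⟨by linarith, by linarith⟩
    · intro hv
      obtain ⟨t, ht, _, hΨt⟩ := hpre v hv
      exact ⟨t, ht, hΨt⟩
  · -- sup
    have himg : Ψ '' Set.Ico (0:ℝ) (1/(q+1)) = Set.Ico (0:ℝ) 1 := by
      ext v
      constructor
      · rintro ⟨t, ht, rfl⟩
        have hs := hspos t ht
        have hle : 1 - (q+1)*t ≤ 1 := by nlinarith [ht.1]
        have h1 : (1 - (q+1)*t) ^ ((q+1)⁻¹) ≤ 1 :=
          Real.rpow_le_one hs.le hle (by positivity)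
        have h2 : 0 < (1 - (q+1)*t) ^ ((q+1)⁻¹) := Real.rpow_pos_of_pos hs _
        rw [hΨf t ht]
        exact ⟨by linarith, by linarith⟩
      · intro hv
        obtain ⟨t, ht, _, hΨt⟩ := hpre v hv
        exact ⟨t, ht, hΨt⟩
    rw [himg, csSup_Ico (by norm_num : (0:ℝ) < 1)]
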